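/- arXiv:1610.09984 — 4 statements merged into one kernel-verified Lean document; each statement's English description precedes it below -/
import Mathlib

section
/- Let f : 2^V → ℝ≥0 be a monotone submodular function with f(∅) = 0, let τ > 0, and let S ⊆ A ⊆ V be such that for every x ∈ A \ S, the marginal gain f(S ∪ {x}) − f(S) < τ. Then for every B ⊆ A with |B| ≤ k, we have f(B) ≤ f(S) + k·τ. -/
theorem small_marginals_bound {V : Type*} [DecidableEq V] (f : Finset V → ℝ)
    (hmono : ∀ S T : Finset V, S ⊆ T → f S ≤ f T)
    (hempty : f ∅ = 0)
    (hsub : ∀ S T : Finset V, S ⊆ T → ∀ v ∉ T,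
      f (insert v T) - f T ≤ f (insert v S) - f S)
    (k : ℕ) (hk : 1 ≤ k) (τ : ℝ) (hτ : 0 < τ)
    (A S : Finset V) (hSA : S ⊆ A)
    (hsmall : ∀ x ∈ A \ S, f (insert x S) - f S < τ)
    (B : Finset V) (hBA : B ⊆ A) (hBcard : B.card ≤ k) :
    f B ≤ f S + (k : ℝ) * τ := by
  have key : ∀ D : Finset V, f (S ∪ D) ≤ f S + ∑ x ∈ D \ S, (f (insert x S) - f S) := by
    intro D
    induction D using Finset.induction_on with
    | empty => simp
    | @insert a D ha ih =>
      by_cases haS : a ∈ S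
      · have h1 : S ∪ insert a D = S ∪ D := by
          rw [Finset.union_insert a S D, Finset.insert_eq_self.mpr (Finset.mem_union_left D haS)]
        have h2 : insert a D \ S = D \ S := Finset.insert_sdiff_of_mem D haS
        rw [h1, h2]; exact ih
      · have haSD : a ∉ S ∪ D := by simp [haS, ha]
        have h1 : S ∪ insert a D = insert a (S ∪ D) := Finset.union_insert a S D
        have h2 : insert a D \ S = insert a (D \ S) := Finset.insert_sdiff_of_notMem D haS
        have h3 := hsub S (S ∪ D) Finset.subset_union_left a haSD
        have h4 : a ∉ D \ S := by simp [ha]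
        rw [h1, h2, Finset.sum_insert h4]
        have := ih
        linarith
  have hB : f B ≤ f (S ∪ B) := hmono _ _ Finset.subset_union_right
  have hbound : ∑ x ∈ B \ S, (f (insert x S) - f S) ≤ (B \ S).card • τ := by
    apply Finset.sum_le_card_nsmul
    intro x hx
    exact le_of_lt (hsmall x (Finset.mem_sdiff.mpr ⟨hBA (Finset.mem_sdiff.mp hx).1, (Finset.mem_sdiff.mp hx).2⟩))
  have hcard : ((B \ S).card : ℝ) ≤ (k : ℝ) := by
    exact_mod_cast le_trans (Finset.card_le_card (Finset.sdiff_subset)) hBcard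
  have : ((B \ S).card : ℝ) * τ ≤ (k : ℝ) * τ :=
    mul_le_mul_of_nonneg_right hcard hτ.le
  have hkey := key B
  rw [nsmul_eq_mul] at hbound
  linarith
end

section
/- Let f : 2^V → ℝ≥0 be monotone submodular with f(∅) = 0, let k ≥ 1, k' with 1 ≤ k' ≤ k, and let τ satisfy (1−δ)·f_{k'}(A)/(k+k') ≤ τ ≤ f_{k'}(A)/(k+k') for some δ ∈ (0,1), where f_{k'}(A) = max_{B ⊆ A, |B| = k'} f(B). Suppose S ⊆ A is a set produced by the threshold rule: elements are processed in some order and each element x is added iff |S| < k and the marginal gain of x with respect to the current set is ≥ τ. Then f(S) ≥ (1−δ) · (k/(k+k')) · f_{k'}(A). -/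
theorem threshold_guarantee {V : Type*} [DecidableEq V] (f : Finset V → ℝ)
    (hmono : ∀ S T : Finset V, S ⊆ T → f S ≤ f T)
    (hempty : f ∅ = 0)
    (hsub : ∀ S T : Finset V, S ⊆ T → ∀ v ∉ T,
      f (insert v T) - f T ≤ f (insert v S) - f S)
    (A : Finset V) (k k' : ℕ) (hk' : 1 ≤ k') (hk'k : k' ≤ k)
    (δ : ℝ) (hδ0 : 0 < δ) (hδ1 : δ < 1)
    (fkA : ℝ) (hfk : IsGreatest {x : ℝ | ∃ B ⊆ A, B.card = k' ∧ f B = x} fkA)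
    (τ : ℝ)
    (hτ1 : (1 - δ) * fkA / ((k : ℝ) + k') ≤ τ)
    (hτ2 : τ ≤ fkA / ((k : ℝ) + k'))
    (S : Finset V) (hSA : S ⊆ A)
    (hrule : (S.card = k ∧ f S ≥ (k : ℝ) * τ) ∨
             (∀ x ∈ A \ S, f (insert x S) - f S < τ)) :
    f S ≥ (1 - δ) * ((k : ℝ) / ((k : ℝ) + k')) * fkA := by
  obtain ⟨⟨B, hBA, hBcard, hBval⟩, hub⟩ := hfk
  have hc : (0:ℝ) < (k : ℝ) + k' := by positivity
  have hfkA0 : 0 ≤ fkA := by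
    rw [← hBval, ← hempty]
    exact hmono _ _ (Finset.empty_subset _)
  have hτ0 : 0 ≤ τ := le_trans (div_nonneg (by nlinarith) hc.le) hτ1
  -- key submodularity sum bound
  have key : ∀ C : Finset V, f (S ∪ C) - f S ≤ ∑ x ∈ C \ S, (f (insert x S) - f S) := by
    intro C
    induction C using Finset.induction with
    | empty => simp
    | @insert a C ha ih =>
      by_cases haS : a ∈ S
      · have h1 : S ∪ insert a C = S ∪ C := by
          ext x; simp only [Finset.mem_union, Finset.mem_insert]
          constructor
          · rintro (h | rfl | h) <;> simp_all
          · rintro (h | h) <;> simp_all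
        have h2 : insert a C \ S = C \ S := by
          ext x; simp only [Finset.mem_sdiff, Finset.mem_insert]
          constructor
          · rintro ⟨rfl | h, hx⟩ <;> simp_all
          · rintro ⟨h, hx⟩; exact ⟨Or.inr h, hx⟩
        rw [h1, h2]; exact ih
      · have h1 : S ∪ insert a C = insert a (S ∪ C) := Finset.union_insert a S C
        have h2 : insert a C \ S = insert a (C \ S) := by
          ext x; simp only [Finset.mem_sdiff, Finset.mem_insert]; constructor
          · rintro ⟨rfl | h, hx⟩ <;> simp_all
          · rintro (rfl | ⟨h, hx⟩) <;> simp_all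
        have haC : a ∉ C \ S := fun h => ha (Finset.mem_sdiff.mp h).1
        rw [h1, h2, Finset.sum_insert haC]
        have haSC : a ∉ S ∪ C := by simp [haS, ha]
        have := hsub S (S ∪ C) (Finset.subset_union_left) a haSC
        linarith
  rcases hrule with ⟨hcard, hval⟩ | hmarg
  · calc (1 - δ) * ((k : ℝ) / ((k : ℝ) + k')) * fkA
        = (k : ℝ) * ((1 - δ) * fkA / ((k : ℝ) + k')) := by ring
      _ ≤ (k : ℝ) * τ := by
          apply mul_le_mul_of_nonneg_left hτ1 (by positivity)
      _ ≤ f S := hval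
  · -- each element of B \ S has marginal < τ
    have hsum : ∑ x ∈ B \ S, (f (insert x S) - f S) ≤ (k' : ℝ) * τ := by
      calc ∑ x ∈ B \ S, (f (insert x S) - f S)
          ≤ ∑ _x ∈ B \ S, τ := by
            apply Finset.sum_le_sum
            intro x hx
            apply le_of_lt
            apply hmarg
            rcases Finset.mem_sdiff.mp hx with ⟨hxB, hxS⟩
            exact Finset.mem_sdiff.mpr ⟨hBA hxB, hxS⟩
        _ = ((B \ S).card : ℝ) * τ := by rw [Finset.sum_const, nsmul_eq_mul]
        _ ≤ (k' : ℝ) * τ := by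
            apply mul_le_mul_of_nonneg_right _ hτ0
            have : (B \ S).card ≤ B.card := Finset.card_le_card (Finset.sdiff_subset)
            exact_mod_cast hBcard ▸ this
    have hB_le : fkA ≤ f S + (k' : ℝ) * τ := by
      have h1 : f B ≤ f (S ∪ B) := hmono _ _ (Finset.subset_union_right)
      have h2 := key B
      linarith [hBval ▸ h1]
    have hτk' : (k' : ℝ) * τ ≤ (k' : ℝ) * (fkA / ((k : ℝ) + k')) :=
      mul_le_mul_of_nonneg_left hτ2 (by positivity)
    have hfS : f S ≥ fkA * ((k : ℝ) / ((k : ℝ) + k')) := by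
      have : fkA - (k' : ℝ) * (fkA / ((k : ℝ) + k')) = fkA * ((k : ℝ) / ((k : ℝ) + k')) := by
        field_simp; ring
      linarith [hB_le, hτk', this ▸ le_refl (fkA * ((k : ℝ) / ((k : ℝ) + k')))]
    calc (1 - δ) * ((k : ℝ) / ((k : ℝ) + k')) * fkA
        ≤ 1 * ((k : ℝ) / ((k : ℝ) + k')) * fkA := by
          apply mul_le_mul_of_nonneg_right _ hfkA0
          apply mul_le_mul_of_nonneg_right _ (by positivity)
          linarith
      _ = fkA * ((k : ℝ) / ((k : ℝ) + k')) := by ring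
      _ ≤ f S := hfS
end

section
/- Let f : 2^V → ℝ≥0 be monotone submodular with f(∅) = 0, and let OPT ⊆ V with |OPT| ≤ k be partitioned as OPT = OPT₁ ∪ OPT₂ with OPT₁ ∩ OPT₂ = ∅, |OPT₁| = k₁, |OPT₂| = k₂. Suppose h₁ and h₂ are real numbers satisfying h₁ ≥ (1−δ)·k·f(OPT₁)/(k+k₁), h₂ ≥ (1−δ)·k·f(OPT₂)/(k+k₂), and h₂ ≥ (1−β)·h₁, where β = δ = ε/2 for some ε ∈ (0,1). Then h₂ ≥ (1/3)·(1−ε)·f(OPT). -/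
theorem subadd_aux {V : Type*} [DecidableEq V] (f : Finset V → ℝ)
    (hmono : ∀ S T : Finset V, S ⊆ T → f S ≤ f T)
    (hempty : f ∅ = 0)
    (hsub : ∀ S T : Finset V, S ⊆ T → ∀ v ∉ T,
      f (insert v T) - f T ≤ f (insert v S) - f S)
    (S T : Finset V) : f (S ∪ T) ≤ f S + f T := by
  induction T using Finset.induction_on with
  | empty => simp [hempty]
  | insert v T hvT ih =>
    by_cases hvS : v ∈ S ∪ T
    · have : S ∪ insert v T = S ∪ T := by
        rw [Finset.union_insert, Finset.insert_eq_self.mpr hvS]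
      rw [this]
      have := hmono T (insert v T) (Finset.subset_insert _ _)
      linarith
    · have key := hsub T (S ∪ T) (Finset.subset_union_right) v hvS
      have : S ∪ insert v T = insert v (S ∪ T) := Finset.union_insert _ _ _
      rw [this]
      linarith

theorem numeric_core (kR k1 k2 A B F ε h₁ h₂ : ℝ)
    (hkR : 1 ≤ kR) (hk1 : 0 ≤ k1) (hk2 : 0 ≤ k2) (hk12 : k1 + k2 ≤ kR)
    (hA0 : 0 ≤ A) (hB0 : 0 ≤ B) (hF : 0 < F) (hsubadd : F ≤ A + B)
    (hε0 : 0 < ε) (hε1 : ε < 1)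
    (hh1 : h₁ ≥ (1 - ε/2) * kR * A / (kR + k1))
    (hh2 : h₂ ≥ (1 - ε/2) * kR * B / (kR + k2))
    (hh21 : h₂ ≥ (1 - ε/2) * h₁) :
    h₂ ≥ (1 / 3) * (1 - ε) * F := by
  have hd2 : (0 : ℝ) < kR + k2 := by linarith
  have hd1 : (0 : ℝ) < kR + k1 := by linarith
  have hδ0 : (0:ℝ) < 1 - ε/2 := by linarith
  by_cases hc : F * (kR + k2) ≤ B * (3 * kR)
  · have key : (1 / 3) * (1 - ε) * F ≤ (1 - ε/2) * kR * B / (kR + k2) := by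
      rw [le_div_iff₀ hd2]
      have hFk : 0 ≤ F * (kR + k2) := by positivity
      nlinarith [mul_le_mul_of_nonneg_left hc (by linarith : (0:ℝ) ≤ (1 - ε/2)/3)]
    linarith
  · push_neg at hc
    have hAF : A * (3 * kR) ≥ F * (2 * kR - k2) := by
      nlinarith [mul_le_mul_of_nonneg_left hsubadd (by linarith : (0:ℝ) ≤ 3 * kR)]
    have key : (1 / 3) * (1 - ε) * F ≤ (1 - ε/2) * ((1 - ε/2) * kR * A / (kR + k1)) := by
      have heq : (1 - ε/2) * ((1 - ε/2) * kR * A / (kR + k1))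
          = (1 - ε/2) * ((1 - ε/2) * kR * A) / (kR + k1) := by ring
      rw [heq, le_div_iff₀ hd1]
      have hεe : (1 - ε) ≤ (1 - ε/2) * (1 - ε/2) := by nlinarith [sq_nonneg ε]
      have hε3 : (0:ℝ) ≤ (1 - ε)/3 := by linarith
      have hkA : (0:ℝ) ≤ kR * A := by positivity
      have h1 : F * (kR + k1) ≤ F * (2 * kR - k2) :=
        mul_le_mul_of_nonneg_left (by linarith) hF.le
      calc (1/3) * (1 - ε) * F * (kR + k1)
          = (1 - ε)/3 * (F * (kR + k1)) := by ring
        _ ≤ (1 - ε)/3 * (F * (2 * kR - k2)) := mul_le_mul_of_nonneg_left h1 hε3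
        _ ≤ (1 - ε)/3 * (A * (3 * kR)) := mul_le_mul_of_nonneg_left hAF hε3
        _ = (1 - ε) * (kR * A) := by ring
        _ ≤ ((1 - ε/2) * (1 - ε/2)) * (kR * A) := mul_le_mul_of_nonneg_right hεe hkA
        _ = (1 - ε/2) * ((1 - ε/2) * kR * A) := by ring
    have h1nn : 0 ≤ h₁ :=
      le_trans (div_nonneg (mul_nonneg (mul_nonneg hδ0.le (by linarith)) hA0) hd1.le) hh1
    have : (1 - ε/2) * ((1 - ε/2) * kR * A / (kR + k1)) ≤ (1 - ε/2) * h₁ :=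
      mul_le_mul_of_nonneg_left hh1 hδ0.le
    linarith

theorem one_third_core {V : Type*} [DecidableEq V] (f : Finset V → ℝ)
    (hmono : ∀ S T : Finset V, S ⊆ T → f S ≤ f T)
    (hempty : f ∅ = 0)
    (hsub : ∀ S T : Finset V, S ⊆ T → ∀ v ∉ T,
      f (insert v T) - f T ≤ f (insert v S) - f S)
    (k k₁ k₂ : ℕ) (hk : 1 ≤ k) (hk12 : k₁ + k₂ ≤ k)
    (OPT OPT₁ OPT₂ : Finset V)
    (hunion : OPT = OPT₁ ∪ OPT₂) (hdisj : Disjoint OPT₁ OPT₂)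
    (hc1 : OPT₁.card = k₁) (hc2 : OPT₂.card = k₂)
    (hpos : 0 < f OPT)
    (ε : ℝ) (hε0 : 0 < ε) (hε1 : ε < 1)
    (δ β : ℝ) (hδ : δ = ε / 2) (hβ : β = ε / 2)
    (h₁ h₂ : ℝ)
    (hh1 : h₁ ≥ (1 - δ) * (k : ℝ) * f OPT₁ / ((k : ℝ) + k₁))
    (hh2 : h₂ ≥ (1 - δ) * (k : ℝ) * f OPT₂ / ((k : ℝ) + k₂))
    (hh21 : h₂ ≥ (1 - β) * h₁) :
    h₂ ≥ (1 / 3) * (1 - ε) * f OPT := by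
  subst hδ hβ
  have hsubadd : f OPT ≤ f OPT₁ + f OPT₂ := by
    rw [hunion]; exact subadd_aux f hmono hempty hsub OPT₁ OPT₂
  have hA0 : 0 ≤ f OPT₁ := by
    have := hmono ∅ OPT₁ (Finset.empty_subset _); linarith
  have hB0 : 0 ≤ f OPT₂ := by
    have := hmono ∅ OPT₂ (Finset.empty_subset _); linarith
  exact numeric_core (k:ℝ) (k₁:ℝ) (k₂:ℝ) (f OPT₁) (f OPT₂) (f OPT) ε h₁ h₂
    (by exact_mod_cast hk) (Nat.cast_nonneg _) (Nat.cast_nonneg _)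
    (by exact_mod_cast hk12) hA0 hB0 hpos hsubadd hε0 hε1 hh1 hh2 hh21
end

section
/- Let f : 2^V → ℝ≥0 be monotone submodular with f(∅) = 0, let k ≥ 1, let A ⊆ V, and let τ satisfy (1−δ)·f_k(A)/(2k) ≤ τ ≤ f_k(A)/(2k) for some δ ∈ (0,1), where f_k(A) = max_{B ⊆ A, |B| ≤ k} f(B). Let S ⊆ A be a set such that either |S| = k and f(S) ≥ kτ, or |S| < k and for every x ∈ A, f(S ∪ {x}) − f(S) < τ. Then f(S) ≥ (1/2)·(1−δ)·f_k(A). -/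
lemma marg_sum {V : Type*} [DecidableEq V] (f : Finset V → ℝ)
    (hsub : ∀ S T : Finset V, S ⊆ T → ∀ v ∉ T,
      f (insert v T) - f T ≤ f (insert v S) - f S)
    (S : Finset V) :
    ∀ T : Finset V, f (S ∪ T) - f S ≤ ∑ x ∈ T \ S, (f (insert x S) - f S) := by
  intro T
  induction T using Finset.induction with
  | empty => simp
  | @insert a T ha ih =>
    by_cases haS : a ∈ S
    · have h1 : S ∪ insert a T = S ∪ T := by
        rw [Finset.union_insert, Finset.insert_eq_self.mpr (Finset.mem_union_left _ haS)]
      have h2 : insert a T \ S = T \ S := by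
        ext x
        simp only [Finset.mem_sdiff, Finset.mem_insert]
        constructor
        · rintro ⟨h | h, hs⟩
          · exact absurd (h ▸ haS) hs
          · exact ⟨h, hs⟩
        · rintro ⟨h, hs⟩; exact ⟨Or.inr h, hs⟩
      rw [h1, h2]; exact ih
    · by_cases haT : a ∈ T
      · exact absurd haT ha
      have h1 : S ∪ insert a T = insert a (S ∪ T) := Finset.union_insert a S T
      have h2 : insert a T \ S = insert a (T \ S) := by
        ext x
        simp only [Finset.mem_sdiff, Finset.mem_insert]
        constructor
        · rintro ⟨h | h, hs⟩
          · exact Or.inl h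
          · exact Or.inr ⟨h, hs⟩
        · rintro (h | ⟨h, hs⟩)
          · exact ⟨Or.inl h, h ▸ haS⟩
          · exact ⟨Or.inr h, hs⟩
      have haST : a ∉ S ∪ T := by simp [haS, haT]
      have key := hsub S (S ∪ T) (Finset.subset_union_left) a haST
      rw [h1, h2, Finset.sum_insert (by simp [haS, haT])]
      have : f (insert a (S ∪ T)) - f S =
          (f (insert a (S ∪ T)) - f (S ∪ T)) + (f (S ∪ T) - f S) := by ring
      rw [this]
      linarith

theorem one_half_core {V : Type*} [DecidableEq V] (f : Finset V → ℝ)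
    (hmono : ∀ S T : Finset V, S ⊆ T → f S ≤ f T)
    (hempty : f ∅ = 0)
    (hsub : ∀ S T : Finset V, S ⊆ T → ∀ v ∉ T,
      f (insert v T) - f T ≤ f (insert v S) - f S)
    (A : Finset V) (k : ℕ) (hk : 1 ≤ k)
    (δ : ℝ) (hδ0 : 0 < δ) (hδ1 : δ < 1)
    (fkA : ℝ) (hfk : IsGreatest {x : ℝ | ∃ B ⊆ A, B.card ≤ k ∧ f B = x} fkA)
    (τ : ℝ)
    (hτ1 : (1 - δ) * fkA / (2 * (k : ℝ)) ≤ τ)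
    (hτ2 : τ ≤ fkA / (2 * (k : ℝ)))
    (S : Finset V) (hSA : S ⊆ A)
    (hrule : (S.card = k ∧ f S ≥ (k : ℝ) * τ) ∨
             (S.card < k ∧ ∀ x ∈ A, f (insert x S) - f S < τ)) :
    f S ≥ (1 / 2) * (1 - δ) * fkA := by
  have hkpos : (0 : ℝ) < (k : ℝ) := by exact_mod_cast hk
  have hfk0 : 0 ≤ fkA := by
    have : (0 : ℝ) ∈ {x : ℝ | ∃ B ⊆ A, B.card ≤ k ∧ f B = x} :=
      ⟨∅, Finset.empty_subset A, by simp, hempty⟩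
    exact hfk.2 this
  have hτ0 : 0 ≤ τ := le_trans (div_nonneg (mul_nonneg (by linarith) hfk0) (by positivity)) hτ1
  rcases hrule with ⟨hcard, hfS⟩ | ⟨hcard, hgain⟩
  · -- f S ≥ k τ ≥ k * (1-δ) fkA / (2k) = (1-δ) fkA / 2
    have : (k : ℝ) * ((1 - δ) * fkA / (2 * (k : ℝ))) ≤ (k : ℝ) * τ :=
      mul_le_mul_of_nonneg_left hτ1 (le_of_lt hkpos)
    have heq : (k : ℝ) * ((1 - δ) * fkA / (2 * (k : ℝ))) = (1 / 2) * (1 - δ) * fkA := by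
      field_simp
    linarith
  · obtain ⟨B, hBA, hBk, hfB⟩ := hfk.1
    have hmarg := marg_sum f hsub S B
    have hBS : f B ≤ f (S ∪ B) := hmono _ _ Finset.subset_union_right
    have hsum : ∑ x ∈ B \ S, (f (insert x S) - f S) ≤ (B \ S).card • τ := by
      apply Finset.sum_le_card_nsmul
      intro x hx
      exact le_of_lt (hgain x (hBA (Finset.mem_sdiff.mp hx).1))
    have hcard' : ((B \ S).card : ℝ) * τ ≤ (k : ℝ) * τ := by
      apply mul_le_mul_of_nonneg_right _ hτ0
      exact_mod_cast le_trans (Finset.card_le_card (Finset.sdiff_subset)) hBk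
    have hkτ : (k : ℝ) * τ ≤ fkA / 2 := by
      have := mul_le_mul_of_nonneg_left hτ2 (le_of_lt hkpos)
      have heq : (k : ℝ) * (fkA / (2 * (k : ℝ))) = fkA / 2 := by
        field_simp
      linarith
    have hnsmul : ((B \ S).card • τ : ℝ) = ((B \ S).card : ℝ) * τ := by
      simp [nsmul_eq_mul]
    have h1 : fkA - f S ≤ fkA / 2 := by
      calc fkA - f S = f B - f S := by rw [hfB]
        _ ≤ f (S ∪ B) - f S := by linarith
        _ ≤ ∑ x ∈ B \ S, (f (insert x S) - f S) := hmarg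
        _ ≤ ((B \ S).card : ℝ) * τ := by rw [← hnsmul]; exact hsum
        _ ≤ (k : ℝ) * τ := hcard'
        _ ≤ fkA / 2 := hkτ
    nlinarith
end
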